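/- In the simplified power minimization problem with additional variables x_sum,n, x_new,n, x_jam,n ≥ 0: minimize Σ_n (λ_r(x_sum,n + x_new,n) + λ_w x_jam,n) subject to Σ_n (λ_r x_sum,n g_sum,n + λ_w x_jam,n g_jam) = C_1 and √(g_radar,n/g_sum,n)·√x_sum,n + √(g_jam/g_sum,n)·√x_new,n ≥ C_{2,n}, where g_jam < g_sum,n for all n — any optimal solution satisfies x_jam,n = 0 for all n. -/

import Mathlib

/-- Lemma 3 / Appendix A: in the simplified power minimization problem, any
optimal solution satisfies `x_jam,n = 0` for all `n` (no jamming in the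
waiting period), since `g_jam < g_sum,n`. -/
theorem no_waiting_period_jamming (N : ℕ) (hN : 1 ≤ N)
    (lamr lamw gjam C1 : ℝ) (gsum gradar C2 : Fin N → ℝ)
    (hlamr : 0 < lamr) (hlamw : 0 < lamw) (hgjam : 0 < gjam)
    (hgradar : ∀ n, 0 < gradar n) (hgsum : ∀ n, gsum n = gradar n + gjam)
    (hC2 : ∀ n, 0 < C2 n) (hC1 : 0 < C1)
    (xs xn xj : Fin N → ℝ)
    (hxs : ∀ n, 0 ≤ xs n) (hxn : ∀ n, 0 ≤ xn n) (hxjpos : ∀ n, 0 ≤ xj n)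
    (hcon1 : ∑ n, (lamr * (xs n * gsum n) + lamw * (xj n * gjam)) = C1)
    (hcon2 : ∀ n, C2 n ≤ Real.sqrt (gradar n / gsum n) * Real.sqrt (xs n) +
      Real.sqrt (gjam / gsum n) * Real.sqrt (xn n))
    (hopt : ∀ ys yn yj : Fin N → ℝ,
      (∀ n, 0 ≤ ys n) → (∀ n, 0 ≤ yn n) → (∀ n, 0 ≤ yj n) →
      (∑ n, (lamr * (ys n * gsum n) + lamw * (yj n * gjam)) = C1) →
      (∀ n, C2 n ≤ Real.sqrt (gradar n / gsum n) * Real.sqrt (ys n) +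
        Real.sqrt (gjam / gsum n) * Real.sqrt (yn n)) →
      ∑ n, (lamr * (xs n + xn n) + lamw * xj n) ≤
        ∑ n, (lamr * (ys n + yn n) + lamw * yj n)) :
    ∀ n, xj n = 0 := by
  intro m
  by_contra hne
  have hxjm : 0 < xj m := lt_of_le_of_ne (hxjpos m) (Ne.symm hne)
  have hgsumpos : ∀ n, 0 < gsum n := fun n => by
    rw [hgsum n]; exact add_pos (hgradar n) hgjam
  have hgs : 0 < gsum m := hgsumpos m
  set δ : ℝ := lamw * xj m * gjam / (lamr * gsum m) with hδdef
  have hδpos : 0 < δ :=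
    div_pos (mul_pos (mul_pos hlamw hxjm) hgjam) (mul_pos hlamr hgs)
  set ys : Fin N → ℝ := Function.update xs m (xs m + δ) with hysdef
  set yj : Fin N → ℝ := Function.update xj m 0 with hyjdef
  have hys0 : ∀ n, 0 ≤ ys n := by
    intro n
    by_cases h : n = m
    · subst h; simp only [hysdef, Function.update_self]
      exact add_nonneg (hxs _) hδpos.le
    · simp [hysdef, Function.update_of_ne h]; exact hxs n
  have hyj0 : ∀ n, 0 ≤ yj n := by
    intro n
    by_cases h : n = m
    · subst h; simp [hyjdef]
    · simp [hyjdef, Function.update_of_ne h]; exact hxjpos n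
  -- key sum-difference lemma
  have key : ∀ f g : Fin N → ℝ, (∀ i, i ≠ m → f i = g i) →
      ∑ i, f i = ∑ i, g i + (f m - g m) := by
    intro f g h
    have : ∑ i, (f i - g i) = f m - g m := by
      apply Finset.sum_eq_single_of_mem m (Finset.mem_univ m)
      intro i _ hi
      rw [h i hi]; ring
    have h2 := Finset.sum_sub_distrib (f := f) (g := g)
      (s := (Finset.univ : Finset (Fin N)))
    linarith [this, h2]
  -- constraint 1 for the new point
  have hδeq : lamr * (δ * gsum m) = lamw * (xj m * gjam) := by
    rw [hδdef, div_mul_eq_mul_div, mul_div_assoc', div_eq_iff (mul_pos hlamr hgs).ne']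
    ring
  have hcon1' : ∑ n, (lamr * (ys n * gsum n) + lamw * (yj n * gjam)) = C1 := by
    have := key (fun n => lamr * (ys n * gsum n) + lamw * (yj n * gjam))
      (fun n => lamr * (xs n * gsum n) + lamw * (xj n * gjam))
      (by intro i hi; simp [hysdef, hyjdef, Function.update_of_ne hi])
    rw [this, hcon1]
    simp only [hysdef, hyjdef, Function.update_self]
    nlinarith [hδeq]
  -- constraint 2 for the new point
  have hcon2' : ∀ n, C2 n ≤ Real.sqrt (gradar n / gsum n) * Real.sqrt (ys n) +
      Real.sqrt (gjam / gsum n) * Real.sqrt (xn n) := by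
    intro n
    by_cases h : n = m
    · rw [h]
      refine le_trans (hcon2 m) ?_
      gcongr
      simp only [hysdef, Function.update_self]
      linarith [hδpos]
    · simp only [hysdef, Function.update_of_ne h]
      exact hcon2 n
  have hle := hopt ys xn yj hys0 hxn hyj0 hcon1' hcon2'
  -- compute objective difference
  have hsum : ∑ n, (lamr * (ys n + xn n) + lamw * yj n) =
      ∑ n, (lamr * (xs n + xn n) + lamw * xj n) +
      (lamr * δ - lamw * xj m) := by
    have := key (fun n => lamr * (ys n + xn n) + lamw * yj n)
      (fun n => lamr * (xs n + xn n) + lamw * xj n)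
      (by intro i hi; simp [hysdef, hyjdef, Function.update_of_ne hi])
    rw [this]
    simp only [hysdef, hyjdef, Function.update_self]
    ring
  -- show lamr * δ - lamw * xj m < 0
  have hgjlt : gjam < gsum m := by
    rw [hgsum m]; linarith [hgradar m]
  have hdec : lamr * δ - lamw * xj m < 0 := by
    have : lamr * δ = lamw * xj m * (gjam / gsum m) := by
      rw [hδdef, mul_div_assoc', mul_div_assoc', div_eq_div_iff (mul_pos hlamr hgs).ne' hgs.ne']; ring
    rw [this]
    have h1 : gjam / gsum m < 1 := (div_lt_one hgs).mpr hgjlt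
    nlinarith [mul_pos hlamw hxjm]
  rw [hsum] at hle
  linarith
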